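/- The function f(x) = x² + 3 sin²(x) on ℝ satisfies the Polyak-Łojasiewicz inequality (1/2)(f'(x))² ≥ (1/32)(f(x) − f*) for all x ∈ ℝ, where f* = 0. -/

import Mathlib

open Real

lemma pl_deriv (x : ℝ) :
    deriv (fun y : ℝ => y ^ 2 + 3 * Real.sin y ^ 2) x = 2*x + 6*Real.sin x*Real.cos x := by
  have h : HasDerivAt (fun y : ℝ => y ^ 2 + 3 * Real.sin y ^ 2)
      (2*x + 6*Real.sin x*Real.cos x) x := by
    have h1 : HasDerivAt (fun y : ℝ => y ^ 2) (2*x) x := by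
      simpa using hasDerivAt_pow 2 x
    have h2 : HasDerivAt (fun y : ℝ => 3 * Real.sin y ^ 2) (6*Real.sin x*Real.cos x) x := by
      have := ((Real.hasDerivAt_sin x).pow 2).const_mul 3
      refine this.congr_deriv ?_
      push_cast; ring
    exact h1.add h2
  exact h.deriv

lemma sin_ge_pi_sub (t : ℝ) (ht : Real.pi ≤ t) : Real.pi - t ≤ Real.sin t := by
  have h1 : Real.sin (t - Real.pi) ≤ t - Real.pi := Real.sin_le (by linarith)
  have h2 : Real.sin (t - Real.pi) = -Real.sin t := by
    rw [Real.sin_sub]; simp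
  linarith

lemma pl_key (x : ℝ) (hx : 0 ≤ x) :
    x ^ 2 + 3 * Real.sin x ^ 2 ≤ 16 * (2*x + 6*Real.sin x*Real.cos x)^2 := by
  have hs1 : Real.sin x ≤ 1 := Real.sin_le_one x
  have hs2 : -1 ≤ Real.sin x := Real.neg_one_le_sin x
  have hpi1 : (3.141592 : ℝ) < Real.pi := Real.pi_gt_d6
  have hpi2 : Real.pi < 3.15 := Real.pi_lt_d2
  rcases le_or_gt x (Real.pi/2) with h1 | h1
  · -- sin x ≤ x, sin x ≥ 0, cos x ≥ 0
    have hsx : Real.sin x ≤ x := Real.sin_le hx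
    have hsn : 0 ≤ Real.sin x := Real.sin_nonneg_of_nonneg_of_le_pi hx (by linarith)
    have hc : 0 ≤ Real.cos x := Real.cos_nonneg_of_mem_Icc ⟨by linarith, h1⟩
    nlinarith [mul_nonneg (mul_nonneg hsn hc) hx, sq_nonneg (Real.sin x * Real.cos x)]
  · have hsin2 : Real.pi - 2*x ≤ Real.sin (2*x) := sin_ge_pi_sub _ (by linarith)
    have h2s : Real.sin (2*x) = 2 * Real.sin x * Real.cos x := Real.sin_two_mul x
    rcases le_or_gt x ((Real.pi+1)/2) with h3 | h3
    · -- f' ≥ 3π - 4x ≥ π - 2 > 0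
      have hlb : 3*Real.pi - 4*x ≤ 2*x + 6*Real.sin x*Real.cos x := by
        rw [h2s] at hsin2; linarith
      have hpos : (0:ℝ) < 3*Real.pi - 4*x := by linarith
      nlinarith [sq_nonneg (Real.sin x)]
    · -- f' ≥ 2x - 3 > 0
      have hlb : 2*x - 3 ≤ 2*x + 6*Real.sin x*Real.cos x := by
        have := Real.neg_one_le_sin (2*x)
        rw [h2s] at this; linarith
      nlinarith [sq_nonneg (Real.sin x)]

theorem example_invex_function_satisfies_PL :
    ∀ x : ℝ, (1 / 32) * ((x ^ 2 + 3 * Real.sin x ^ 2) - 0) ≤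
      1 / 2 * (deriv (fun y : ℝ => y ^ 2 + 3 * Real.sin y ^ 2) x) ^ 2 := by
  intro x
  rw [pl_deriv]
  rcases le_or_gt 0 x with hx | hx
  · have := pl_key x hx
    nlinarith
  · have := pl_key (-x) (by linarith)
    rw [Real.sin_neg, Real.cos_neg] at this
    nlinarith
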